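/- arXiv:1510.01868 — 2 statements merged into one kernel-verified Lean document; each statement's English description precedes it below -/
import Mathlib

section
/- Let U be a finite semigroup, S a subsemigroup, x ∈ S with x' ∈ U satisfying x x' x = x. The map from the quotient of Stab_S(L_x^U) by the kernel of its action on L_x^U to the group (L_x^U ∩ R_x^S, *), given by sending the class of s to xs, is a well-defined group isomorphism, where s * t = s x' t. -/
variable {U : Type*}

/-- Green's R-relation relative to a set `T` of multipliers (`T = S` gives `R^S`,
`T = Set.univ` gives `R^U`): `x R y` iff `x ∈ y T^1` and `y ∈ x T^1`. -/
def GreenR [Mul U] (T : Set U) (x y : U) : Prop :=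
  (x = y ∨ ∃ a ∈ T, x * a = y) ∧ (y = x ∨ ∃ a ∈ T, y * a = x)

/-- Green's L-relation relative to a set `T` of multipliers. -/
def GreenL [Mul U] (T : Set U) (x y : U) : Prop :=
  (x = y ∨ ∃ a ∈ T, a * x = y) ∧ (y = x ∨ ∃ a ∈ T, a * y = x)

/-- Green's H-relation relative to `T`. -/
def GreenH [Mul U] (T : Set U) (x y : U) : Prop :=
  GreenL T x y ∧ GreenR T x y

/-- Green's D-relation relative to `T` (for finite semigroups, `D = R ∘ L`). -/
def GreenD [Mul U] (T : Set U) (x y : U) : Prop :=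
  ∃ z, GreenR T x z ∧ GreenL T z y

/-- The `L^U`-class of `x` in the ambient semigroup `U`. -/
def Lcl [Mul U] (x : U) : Set U := {y | GreenL Set.univ x y}

/-- The `R^U`-class of `x` in the ambient semigroup `U`. -/
def RclU [Mul U] (x : U) : Set U := {y | GreenR Set.univ x y}

/-- The `R`-class of `x` relative to multipliers from `T`. -/
def Rcl [Mul U] (T : Set U) (x : U) : Set U := {y | GreenR T x y}

/-- `L_a^U` reaches `L_b^U` under the right action of `T^1` on `L^U`-classes
given by `L_a · s = L_{a s}`. -/
def reachC [Mul U] (T : Set U) (a b : U) : Prop :=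
  Lcl a = Lcl b ∨ ∃ s ∈ T, Lcl (a * s) = Lcl b

/-- `R_a^U` reaches `R_b^U` under the left action of `T^1` on `R^U`-classes. -/
def reachCL [Mul U] (T : Set U) (a b : U) : Prop :=
  RclU a = RclU b ∨ ∃ s ∈ T, RclU (s * a) = RclU b

/-- The right action of `S^1` (identity adjoined, encoded as `Option ↥S`) on `U`. -/
def act1 [Mul U] (S : Subsemigroup U) (u : U) (o : Option ↥S) : U :=
  o.elim u (fun s => u * (s : U))

/-- The left action of `S^1` on `U`. -/
def act1L [Mul U] (S : Subsemigroup U) (o : Option ↥S) (u : U) : U :=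
  o.elim u (fun s => (s : U) * u)

/-- The stabiliser `Stab_S(L_x^U)` of the `L^U`-class of `x` under the right
action of `S^1` on subsets of `U`. -/
def StabOfL [Mul U] (S : Subsemigroup U) (x : U) : Set (Option ↥S) :=
  {o | (fun y => act1 S y o) '' Lcl x = Lcl x}

/-- The stabiliser `Stab_S(R_x^U)` of the `R^U`-class of `x` under the left
action of `S^1` on subsets of `U`. -/
def StabOfR [Mul U] (S : Subsemigroup U) (x : U) : Set (Option ↥S) :=
  {o | (fun y => act1L S o y) '' RclU x = RclU x}

section Aux

variable {U : Type*}

/-- Left divisibility with identity adjoined: `v ∈ U^1 u`. -/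
private def ld [Mul U] (u v : U) : Prop := u = v ∨ ∃ c, c * u = v

private lemma mem_lcl_iff [Mul U] {x y : U} : y ∈ Lcl x ↔ ld x y ∧ ld y x := by
  simp [Lcl, GreenL, ld, Set.mem_setOf_eq]

private lemma ld_trans [Semigroup U] {u v w : U} (h1 : ld u v) (h2 : ld v w) : ld u w := by
  rcases h1 with rfl | ⟨c, rfl⟩
  · exact h2
  · rcases h2 with rfl | ⟨d, rfl⟩
    · exact Or.inr ⟨c, rfl⟩
    · exact Or.inr ⟨d * c, mul_assoc d c u⟩

private lemma ld_mul [Semigroup U] {u v : U} (a : U) (h : ld u v) : ld (u * a) (v * a) := by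
  rcases h with rfl | ⟨c, rfl⟩
  · exact Or.inl rfl
  · exact Or.inr ⟨c, (mul_assoc c u a).symm⟩

private lemma mem_lcl_self [Mul U] (x : U) : x ∈ Lcl x :=
  ⟨Or.inl rfl, Or.inl rfl⟩

private lemma lcl_mul_mem [Semigroup U] {x z a : U} (hz : z ∈ Lcl x) (hg : x * a ∈ Lcl x) :
    z * a ∈ Lcl x := by
  rw [mem_lcl_iff] at hz hg ⊢
  exact ⟨ld_trans hg.1 (ld_mul a hz.1), ld_trans (ld_mul a hz.2) hg.2⟩

private lemma key4 [Semigroup U] {x x' u : U} (hx' : x * x' * x = x) (hu : u ∈ Lcl x) :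
    u * x' * x = u := by
  rcases (mem_lcl_iff.mp hu).1 with rfl | ⟨c, rfl⟩
  · exact hx'
  · rw [mul_assoc c, mul_assoc c, hx']

/-- `spow s n = s ^ (n+1)` in a semigroup without identity. -/
private def spow [Mul U] (s : U) : ℕ → U
  | 0 => s
  | n + 1 => spow s n * s

private lemma spow_mem [Mul U] {S : Subsemigroup U} {s : U} (hs : s ∈ S) :
    ∀ n, spow s n ∈ S
  | 0 => hs
  | n + 1 => S.mul_mem (spow_mem hs n) hs

private lemma mul_spow [Semigroup U] (s : U) : ∀ n, s * spow s n = spow s (n + 1)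
  | 0 => rfl
  | n + 1 => by
    show s * (spow s n * s) = spow s (n + 1) * s
    rw [← mul_assoc, mul_spow s n]

private lemma iterate_mul_eq [Semigroup U] (s : U) :
    ∀ n y, (fun z => z * s)^[n + 1] y = y * spow s n
  | 0, y => rfl
  | n + 1, y => by
    rw [Function.iterate_succ_apply' (fun z => z * s) (n + 1) y, iterate_mul_eq s n y]
    show y * spow s n * s = y * (spow s n * s)
    rw [mul_assoc]

private lemma stab_some [Semigroup U] [Finite U] (S : Subsemigroup U) (x : U) {a b : U}
    (ha : a ∈ S) (hg : x * a ∈ Lcl x) (hab : x * (a * b) = x) :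
    (some ⟨a, ha⟩ : Option ↥S) ∈ StabOfL S x := by
  have hfix : ∀ z ∈ Lcl x, z * (a * b) = z := by
    intro z hz
    rcases (mem_lcl_iff.mp hz).1 with rfl | ⟨c, rfl⟩
    · exact hab
    · rw [mul_assoc, hab]
  have hmaps : Set.MapsTo (fun z => z * a) (Lcl x) (Lcl x) := fun z hz => lcl_mul_mem hz hg
  have hinj : Set.InjOn (fun z => z * a) (Lcl x) := by
    intro y hy y' hy' h
    have : y * (a * b) = y' * (a * b) := by
      rw [← mul_assoc, ← mul_assoc]
      exact congrArg (· * b) h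
    rwa [hfix y hy, hfix y' hy'] at this
  have hbij := ((Set.toFinite (Lcl x)).injOn_iff_bijOn_of_mapsTo hmaps).mp hinj
  show (fun y => act1 S y (some ⟨a, ha⟩)) '' Lcl x = Lcl x
  exact hbij.image_eq

private lemma exists_right_inv [Semigroup U] [Finite U] (S : Subsemigroup U) (x : U) (s : ↥S)
    (ho : (some s : Option ↥S) ∈ StabOfL S x) : ∃ t ∈ S, x * s * t = x := by
  set f : U → U := fun z => z * (s : U) with hf
  have him : f '' Lcl x = Lcl x := ho
  have hmaps : Set.MapsTo f (Lcl x) (Lcl x) := fun z hz => him ▸ Set.mem_image_of_mem f hz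
  have hsurj : Set.SurjOn f (Lcl x) (Lcl x) := him.symm.subset
  have hbij := ((Set.toFinite (Lcl x)).surjOn_iff_bijOn_of_mapsTo hmaps).mp hsurj
  have hinj : Set.InjOn f (Lcl x) := hbij.injOn
  -- pigeonhole: some iterate fixes x
  obtain ⟨i, j, hij, hfij⟩ := Finite.exists_ne_map_eq_of_infinite (fun n : ℕ => f^[n] x)
  have hxl : x ∈ Lcl x := mem_lcl_self x
  have key : ∀ i j : ℕ, i < j → f^[i] x = f^[j] x → ∃ k, 1 ≤ k ∧ f^[k] x = x := by
    intro i j hlt h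
    refine ⟨j - i, by omega, ?_⟩
    have hji : i + (j - i) = j := by omega
    have h2 : f^[i] (f^[j - i] x) = f^[i] x := by
      rw [← Function.iterate_add_apply, hji, h]
    exact (hinj.iterate hmaps i) (hmaps.iterate (j - i) hxl) hxl h2
  obtain ⟨k, hk1, hk⟩ : ∃ k, 1 ≤ k ∧ f^[k] x = x := by
    rcases hij.lt_or_gt with h | h
    · exact key i j h hfij
    · exact key j i h hfij.symm
  have h2k : f^[k + k] x = x := by rw [Function.iterate_add_apply, hk, hk]
  refine ⟨spow (s : U) (k + k - 2), spow_mem s.2 _, ?_⟩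
  have hkk : (k + k - 2) + 1 + 1 = k + k := by omega
  calc x * (s : U) * spow (s : U) (k + k - 2)
      = x * ((s : U) * spow (s : U) (k + k - 2)) := mul_assoc _ _ _
    _ = x * spow (s : U) ((k + k - 2) + 1) := by rw [mul_spow]
    _ = f^[(k + k - 2) + 1 + 1] x := (iterate_mul_eq (s : U) _ x).symm
    _ = x := by rw [hkk, h2k]

end Aux

/-- The map `s ↦ x s` from the quotient of `Stab_S(L_x^U)` by the kernel of its
action on `L_x^U` to the group `(L_x^U ∩ R_x^S, s * t = s x' t)` is a
well-defined group isomorphism: it maps into `L_x^U ∩ R_x^S`; two stabiliser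
elements induce the same map on `L_x^U` iff they have the same image (so the map
on the quotient is well defined and injective); it is surjective; and it is a
homomorphism with respect to the multiplication `s * t = s x' t`. -/
theorem stab_quotient_iso_lclass_inter_rclass [Semigroup U] [Finite U]
    (S : Subsemigroup U) (x : U) (hx : x ∈ S) (x' : U) (hx' : x * x' * x = x) :
    (∀ o ∈ StabOfL S x, act1 S x o ∈ Lcl x ∩ Rcl (S : Set U) x) ∧
    (∀ o ∈ StabOfL S x, ∀ p ∈ StabOfL S x,
      ((∀ y ∈ Lcl x, act1 S y o = act1 S y p) ↔ act1 S x o = act1 S x p)) ∧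
    (∀ g ∈ Lcl x ∩ Rcl (S : Set U) x, ∃ o ∈ StabOfL S x, act1 S x o = g) ∧
    (∀ o ∈ StabOfL S x, ∀ p ∈ StabOfL S x,
      act1 S (act1 S x o) p = act1 S x o * x' * act1 S x p) := by
  have hxl : x ∈ Lcl x := mem_lcl_self x
  have hmemL : ∀ o ∈ StabOfL S x, act1 S x o ∈ Lcl x := by
    intro o ho
    have : act1 S x o ∈ (fun y => act1 S y o) '' Lcl x := Set.mem_image_of_mem _ hxl
    rwa [ho] at this
  refine ⟨?_, ?_, ?_, ?_⟩
  · intro o ho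
    refine ⟨hmemL o ho, ?_⟩
    match o with
    | none => exact ⟨Or.inl rfl, Or.inl rfl⟩
    | some s =>
      obtain ⟨t, ht, hxt⟩ := exists_right_inv S x s ho
      exact ⟨Or.inr ⟨s, s.2, rfl⟩, Or.inr ⟨t, ht, hxt⟩⟩
  · intro o ho p hp
    constructor
    · intro h
      exact h x hxl
    · intro h y hy
      rcases (mem_lcl_iff.mp hy).1 with rfl | ⟨c, rfl⟩
      · exact h
      · match o, p with
        | none, none => rfl
        | none, some t =>
          show c * x = c * x * t
          have h' : x = x * t := h
          rw [mul_assoc, ← h']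
        | some s, none =>
          show c * x * s = c * x
          have h' : x * (s : U) = x := h
          rw [mul_assoc, h']
        | some s, some t =>
          show c * x * s = c * x * t
          have h' : x * (s : U) = x * t := h
          rw [mul_assoc, mul_assoc, h']
  · intro g hg
    by_cases hgx : g = x
    · subst hgx
      refine ⟨none, ?_, rfl⟩
      show (fun y => act1 S y none) '' Lcl g = Lcl g
      simp [act1]
    · obtain ⟨ha', hb'⟩ := hg.2
      rcases ha' with h | ⟨a, haS, hxa⟩
      · exact absurd h.symm hgx
      rcases hb' with h | ⟨b, hbS, hgb⟩
      · exact absurd h hgx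
      have hab : x * (a * b) = x := by rw [← mul_assoc, hxa, hgb]
      have hgl : x * a ∈ Lcl x := by rw [hxa]; exact hg.1
      exact ⟨some ⟨a, haS⟩, stab_some S x haS hgl hab, hxa⟩
  · intro o ho p hp
    match o, p with
    | none, none => exact hx'.symm
    | none, some t =>
      show x * t = x * x' * (x * t)
      rw [← mul_assoc, hx']
    | some s, none =>
      show x * s = x * s * x' * x
      have hm : x * (s : U) ∈ Lcl x := hmemL (some s) ho
      exact (key4 hx' hm).symm
    | some s, some t =>
      show x * s * t = x * s * x' * (x * t)
      have hm : x * (s : U) ∈ Lcl x := hmemL (some s) ho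
      rw [← mul_assoc, key4 hx' hm]
end

section
/- Let U be a finite semigroup, S a subsemigroup, x ∈ S with x' ∈ U satisfying x x' x = x. Then R_x^S = {x s u : s ∈ Stab_S(L_x^U), u ∈ U_cal}, where U_cal is any subset of S^1 such that {L_{xu}^U : u ∈ U_cal} equals the set of all L^U-classes in the strongly connected component of L_x^U under the right action of S. -/
variable {U : Type*}

/-! ### Auxiliary machinery -/

/-- Multiplication on `S^1 = Option ↥S`. -/
def mul1 [Mul U] (S : Subsemigroup U) : Option ↥S → Option ↥S → Option ↥S
  | none, p => p
  | some a, none => some a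
  | some a, some b => some (a * b)

/-- Power in `S^1` (with `pow1 c 0 = 1 = none`). -/
def pow1 [Mul U] (S : Subsemigroup U) (c : Option ↥S) : ℕ → Option ↥S
  | 0 => none
  | n + 1 => mul1 S (pow1 S c n) c

theorem mul1_none_left [Mul U] (S : Subsemigroup U) (p : Option ↥S) :
    mul1 S none p = p := rfl

theorem mul1_none_right [Mul U] (S : Subsemigroup U) (o : Option ↥S) :
    mul1 S o none = o := by cases o <;> rfl

theorem mul1_assoc [Semigroup U] (S : Subsemigroup U) (a b c : Option ↥S) :
    mul1 S (mul1 S a b) c = mul1 S a (mul1 S b c) := by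
  cases a <;> cases b <;> cases c <;> simp [mul1, mul_assoc]

theorem act1_mul1 [Semigroup U] (S : Subsemigroup U) (u : U) (o p : Option ↥S) :
    act1 S u (mul1 S o p) = act1 S (act1 S u o) p := by
  cases o <;> cases p <;> simp [act1, mul1, mul_assoc]

theorem mul_act1 [Semigroup U] (S : Subsemigroup U) (p u : U) (o : Option ↥S) :
    act1 S (p * u) o = p * act1 S u o := by
  cases o <;> simp [act1, mul_assoc]

theorem pow1_succ_left [Semigroup U] (S : Subsemigroup U) (c : Option ↥S) (n : ℕ) :
    pow1 S c (n + 1) = mul1 S c (pow1 S c n) := by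
  induction n with
  | zero => simp [pow1, mul1_none_left, mul1_none_right]
  | succ n ih =>
      calc mul1 S (pow1 S c (n + 1)) c
          = mul1 S (mul1 S c (pow1 S c n)) c := by rw [ih]
        _ = mul1 S c (mul1 S (pow1 S c n) c) := mul1_assoc S c _ c
        _ = mul1 S c (pow1 S c (n + 1)) := rfl

theorem pow1_add [Semigroup U] (S : Subsemigroup U) (c : Option ↥S) (m n : ℕ) :
    mul1 S (pow1 S c m) (pow1 S c n) = pow1 S c (m + n) := by
  induction n with
  | zero => simp [pow1, mul1_none_right]
  | succ n ih =>
      show mul1 S (pow1 S c m) (mul1 S (pow1 S c n) c) = mul1 S (pow1 S c (m + n)) c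
      rw [← mul1_assoc, ih]

theorem mul1_pow1_swap [Semigroup U] (S : Subsemigroup U) (p q : Option ↥S) (n : ℕ) :
    mul1 S (pow1 S (mul1 S p q) n) p = mul1 S p (pow1 S (mul1 S q p) n) := by
  induction n with
  | zero => simp [pow1, mul1_none_left, mul1_none_right]
  | succ n ih =>
      calc mul1 S (mul1 S (pow1 S (mul1 S p q) n) (mul1 S p q)) p
          = mul1 S (pow1 S (mul1 S p q) n) (mul1 S (mul1 S p q) p) :=
            mul1_assoc S _ _ _
        _ = mul1 S (pow1 S (mul1 S p q) n) (mul1 S p (mul1 S q p)) := by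
            rw [mul1_assoc]
        _ = mul1 S (mul1 S (pow1 S (mul1 S p q) n) p) (mul1 S q p) :=
            (mul1_assoc S _ _ _).symm
        _ = mul1 S (mul1 S p (pow1 S (mul1 S q p) n)) (mul1 S q p) := by rw [ih]
        _ = mul1 S p (mul1 S (pow1 S (mul1 S q p) n) (mul1 S q p)) :=
            mul1_assoc S _ _ _
        _ = mul1 S p (pow1 S (mul1 S q p) (n + 1)) := rfl

theorem pow1_swap [Semigroup U] (S : Subsemigroup U) (p q : Option ↥S) (n : ℕ) :
    pow1 S (mul1 S p q) (n + 1) = mul1 S p (mul1 S (pow1 S (mul1 S q p) n) q) := by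
  show mul1 S (pow1 S (mul1 S p q) n) (mul1 S p q) = _
  rw [← mul1_assoc, mul1_pow1_swap, mul1_assoc]

theorem greenL_refl [Mul U] (a : U) : GreenL Set.univ a a :=
  ⟨Or.inl rfl, Or.inl rfl⟩

theorem greenL_symm [Mul U] {a b : U} (h : GreenL Set.univ a b) :
    GreenL Set.univ b a := ⟨h.2, h.1⟩

private theorem greenL_comp_trans [Semigroup U] {a b c : U}
    (h1 : a = b ∨ ∃ p ∈ (Set.univ : Set U), p * a = b)
    (h2 : b = c ∨ ∃ q ∈ (Set.univ : Set U), q * b = c) :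
    a = c ∨ ∃ r ∈ (Set.univ : Set U), r * a = c := by
  rcases h1 with rfl | ⟨p, -, rfl⟩
  · exact h2
  · rcases h2 with rfl | ⟨q, -, rfl⟩
    · exact Or.inr ⟨p, trivial, rfl⟩
    · exact Or.inr ⟨q * p, trivial, (mul_assoc q p a).symm ▸ rfl⟩

theorem greenL_trans [Semigroup U] {a b c : U} (h1 : GreenL Set.univ a b)
    (h2 : GreenL Set.univ b c) : GreenL Set.univ a c :=
  ⟨greenL_comp_trans h1.1 h2.1, greenL_comp_trans h2.2 h1.2⟩

theorem lcl_eq_iff [Semigroup U] {a b : U} :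
    Lcl a = Lcl b ↔ GreenL Set.univ a b := by
  constructor
  · intro h
    have : b ∈ Lcl a := h ▸ greenL_refl b
    exact this
  · intro h
    ext z
    exact ⟨fun hz => greenL_trans (greenL_symm h) hz, fun hz => greenL_trans h hz⟩

theorem greenL_mul_right [Semigroup U] {a b : U} (c : U)
    (h : GreenL Set.univ a b) : GreenL Set.univ (a * c) (b * c) := by
  constructor
  · rcases h.1 with rfl | ⟨p, -, rfl⟩
    · exact Or.inl rfl
    · exact Or.inr ⟨p, trivial, (mul_assoc p a c).symm⟩
  · rcases h.2 with heq | ⟨q, -, hq⟩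
    · exact Or.inl (by rw [heq])
    · exact Or.inr ⟨q, trivial, by rw [← mul_assoc, hq]⟩

theorem lcl_mul_congr [Semigroup U] {a b : U} (c : U) (h : Lcl a = Lcl b) :
    Lcl (a * c) = Lcl (b * c) :=
  lcl_eq_iff.mpr (greenL_mul_right c (lcl_eq_iff.mp h))

theorem lcl_act1_congr [Semigroup U] (S : Subsemigroup U) {a b : U}
    (o : Option ↥S) (h : Lcl a = Lcl b) :
    Lcl (act1 S a o) = Lcl (act1 S b o) := by
  cases o with
  | none => exact h
  | some g => exact lcl_mul_congr _ h

theorem lcl_act1_pow [Semigroup U] (S : Subsemigroup U) {y : U} {c : Option ↥S}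
    (h : Lcl (act1 S y c) = Lcl y) (k : ℕ) :
    Lcl (act1 S y (pow1 S c k)) = Lcl y := by
  induction k with
  | zero => rfl
  | succ k ih =>
      show Lcl (act1 S y (mul1 S (pow1 S c k) c)) = Lcl y
      rw [act1_mul1]
      calc Lcl (act1 S (act1 S y (pow1 S c k)) c) = Lcl (act1 S y c) :=
            lcl_act1_congr S c ih
        _ = Lcl y := h

theorem exists_pow1_idem [Semigroup U] [Finite U] (S : Subsemigroup U) (c : Option ↥S) :
    ∃ n, 1 ≤ n ∧ mul1 S (pow1 S c n) (pow1 S c n) = pow1 S c n := by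
  haveI : Finite ↥S := Subtype.finite
  haveI : Finite (Option ↥S) := Finite.of_equiv (↥S ⊕ PUnit.{1}) (Equiv.optionEquivSumPUnit ↥S).symm
  obtain ⟨i, j, hne, heq⟩ := Finite.exists_ne_map_eq_of_infinite (pow1 S c)
  wlog hij : i < j generalizing i j
  · exact this j i hne.symm heq.symm (by omega)
  set d := j - i with hd
  have hd1 : 1 ≤ d := by omega
  have per : ∀ k, i ≤ k → pow1 S c (k + d) = pow1 S c k := by
    intro k hk
    induction k, hk using Nat.le_induction with
    | base =>
        have h0 : i + d = j := by omega
        rw [h0]; exact heq.symm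
    | succ k hk ih =>
        have h1 : k + 1 + d = (k + d) + 1 := by omega
        rw [h1]
        show mul1 S (pow1 S c (k + d)) c = mul1 S (pow1 S c k) c
        rw [ih]
  have perN : ∀ t k, i ≤ k → pow1 S c (k + t * d) = pow1 S c k := by
    intro t
    induction t with
    | zero => intro k _; simp
    | succ t ih =>
        intro k hk
        have h1 : k + (t + 1) * d = (k + t * d) + d := by ring
        rw [h1, per _ (le_trans hk (Nat.le_add_right _ _)), ih k hk]
  have hin : i + 1 ≤ (i + 1) * d := by
    calc i + 1 = (i + 1) * 1 := by ring
      _ ≤ (i + 1) * d := Nat.mul_le_mul_left _ hd1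
  refine ⟨(i + 1) * d, by omega, ?_⟩
  rw [pow1_add]
  exact perN (i + 1) ((i + 1) * d) (by omega)

theorem stab_pow_fix [Semigroup U] [Finite U] (S : Subsemigroup U) {y : U}
    {c : Option ↥S} (h : Lcl (act1 S y c) = Lcl y) :
    ∃ n, 1 ≤ n ∧ ∀ z, GreenL Set.univ y z → act1 S z (pow1 S c n) = z := by
  obtain ⟨n, hn1, hidem⟩ := exists_pow1_idem S c
  set e := pow1 S c n with he
  have hLe : Lcl (act1 S y e) = Lcl y := lcl_act1_pow S h n
  have hgl : GreenL Set.univ y (act1 S y e) := lcl_eq_iff.mp hLe.symm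
  have hye : act1 S y e = y := by
    rcases hgl.2 with h1 | ⟨p, -, hp⟩
    · exact h1
    · calc act1 S y e = act1 S (p * act1 S y e) e := by rw [hp]
        _ = p * act1 S (act1 S y e) e := mul_act1 S _ _ _
        _ = p * act1 S y (mul1 S e e) := by rw [act1_mul1]
        _ = p * act1 S y e := by rw [hidem]
        _ = y := hp
  refine ⟨n, hn1, fun z hz => ?_⟩
  rcases hz.1 with rfl | ⟨q, -, rfl⟩
  · exact hye
  · rw [mul_act1, hye]

theorem mem_stab_iff [Semigroup U] [Finite U] (S : Subsemigroup U) (x : U)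
    (o : Option ↥S) : o ∈ StabOfL S x ↔ Lcl (act1 S x o) = Lcl x := by
  constructor
  · intro h
    have hx : act1 S x o ∈ Lcl x := h ▸ ⟨x, greenL_refl x, rfl⟩
    exact (lcl_eq_iff.mpr hx).symm
  · intro h
    apply Set.Subset.antisymm
    · rintro _ ⟨z, hz, rfl⟩
      have hz' : GreenL Set.univ x z := hz
      have : Lcl (act1 S z o) = Lcl x := by
        rw [← lcl_act1_congr S o (lcl_eq_iff.mpr hz'), h]
      exact lcl_eq_iff.mp this.symm
    · intro z hz
      have hz' : GreenL Set.univ x z := hz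
      obtain ⟨n, hn, hfix⟩ := stab_pow_fix S h
      obtain ⟨m, rfl⟩ : ∃ m, n = m + 1 := ⟨n - 1, by omega⟩
      refine ⟨act1 S z (pow1 S o m), ?_, ?_⟩
      · show GreenL Set.univ x (act1 S z (pow1 S o m))
        have : Lcl (act1 S z (pow1 S o m)) = Lcl x := by
          rw [← lcl_act1_congr S (pow1 S o m) (lcl_eq_iff.mpr hz'),
            lcl_act1_pow S h m]
        exact lcl_eq_iff.mp this.symm
      · show act1 S (act1 S z (pow1 S o m)) o = z
        rw [← act1_mul1]
        exact hfix z hz'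

theorem comp_iff [Mul U] (S : Subsemigroup U) {a b : U} :
    (a = b ∨ ∃ c ∈ (S : Set U), a * c = b) ↔ ∃ o : Option ↥S, act1 S a o = b := by
  constructor
  · rintro (rfl | ⟨c, hc, h⟩)
    · exact ⟨none, rfl⟩
    · exact ⟨some ⟨c, hc⟩, h⟩
  · rintro ⟨o, rfl⟩
    cases o with
    | none => exact Or.inl rfl
    | some g => exact Or.inr ⟨(g : U), g.2, rfl⟩

/-- If `x ∈ S` and `x' ∈ U` satisfies `x x' x = x`, and `Ucal ⊆ S^1` is any
subset such that `{L_{xu}^U : u ∈ Ucal}` is exactly the set of `L^U`-classes in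
the strongly connected component of `L_x^U` under the right action of `S`, then
`R_x^S = {x s u : s ∈ Stab_S(L_x^U), u ∈ Ucal}`. -/
theorem rclass_eq_orbit_form [Semigroup U] [Finite U] (S : Subsemigroup U)
    (x : U) (hx : x ∈ S) (x' : U) (hx' : x * x' * x = x)
    (Ucal : Set (Option ↥S))
    (hU : {B : Set U | ∃ u ∈ Ucal, B = Lcl (act1 S x u)} =
      {B : Set U | ∃ z : U, B = Lcl z ∧ reachC (S : Set U) x z ∧ reachC (S : Set U) z x}) :
    Rcl (S : Set U) x =
      {w | ∃ s ∈ StabOfL S x, ∃ u ∈ Ucal, w = act1 S (act1 S x s) u} := by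
  ext w
  simp only [Rcl, Set.mem_setOf_eq]
  constructor
  · rintro ⟨h1, h2⟩
    obtain ⟨a, ha⟩ := (comp_iff S).mp h1
    obtain ⟨b, hb⟩ := (comp_iff S).mp h2
    have hreach1 : reachC (S : Set U) x w := by
      cases a with
      | none => exact Or.inl (by rw [← ha]; rfl)
      | some g => exact Or.inr ⟨(g : U), g.2, by rw [← ha]; rfl⟩
    have hreach2 : reachC (S : Set U) w x := by
      cases b with
      | none => exact Or.inl (by rw [← hb]; rfl)
      | some g => exact Or.inr ⟨(g : U), g.2, by rw [← hb]; rfl⟩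
    have hmem : Lcl w ∈ {B : Set U | ∃ z : U, B = Lcl z ∧
        reachC (S : Set U) x z ∧ reachC (S : Set U) z x} :=
      ⟨w, rfl, hreach1, hreach2⟩
    rw [← hU] at hmem
    obtain ⟨u, huU, hLu⟩ := hmem
    obtain ⟨v', hv'⟩ : ∃ v' : Option ↥S, Lcl (act1 S w v') = Lcl x := by
      rcases hreach2 with h | ⟨v, hvS, h⟩
      · exact ⟨none, h⟩
      · exact ⟨some ⟨v, hvS⟩, h⟩
    have hxu_w : Lcl (act1 S x u) = Lcl w := hLu.symm
    have key : Lcl (act1 S w (mul1 S v' u)) = Lcl w := by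
      rw [act1_mul1]
      calc Lcl (act1 S (act1 S w v') u) = Lcl (act1 S x u) := lcl_act1_congr S u hv'
        _ = Lcl w := hxu_w
    obtain ⟨n, hn, hfix⟩ := stab_pow_fix S key
    obtain ⟨m, rfl⟩ : ∃ m, n = m + 1 := ⟨n - 1, by omega⟩
    have hw : act1 S w (pow1 S (mul1 S v' u) (m + 1)) = w := hfix w (greenL_refl w)
    refine ⟨mul1 S a (mul1 S v' (pow1 S (mul1 S u v') m)), ?_, u, huU, ?_⟩
    · rw [mem_stab_iff]
      have e1 : act1 S x (mul1 S a (mul1 S v' (pow1 S (mul1 S u v') m)))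
          = act1 S (act1 S w v') (pow1 S (mul1 S u v') m) := by
        rw [act1_mul1, act1_mul1, ha]
      rw [e1]
      have e3 : Lcl (act1 S x (mul1 S u v')) = Lcl x := by
        rw [act1_mul1]
        calc Lcl (act1 S (act1 S x u) v') = Lcl (act1 S w v') :=
              lcl_act1_congr S v' hxu_w
          _ = Lcl x := hv'
      calc Lcl (act1 S (act1 S w v') (pow1 S (mul1 S u v') m))
          = Lcl (act1 S x (pow1 S (mul1 S u v') m)) :=
            lcl_act1_congr S _ hv'
        _ = Lcl x := lcl_act1_pow S e3 m
    · rw [← act1_mul1, mul1_assoc, mul1_assoc, ← pow1_swap, act1_mul1, ha, hw]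
  · rintro ⟨s, hsStab, u, huU, rfl⟩
    have hsL : Lcl (act1 S x s) = Lcl x := (mem_stab_iff S x s).mp hsStab
    constructor
    · exact (comp_iff S).mpr ⟨mul1 S s u, act1_mul1 S x s u⟩
    · have hwL : Lcl (act1 S (act1 S x s) u) = Lcl (act1 S x u) :=
        lcl_act1_congr S u hsL
      have hmem : Lcl (act1 S x u) ∈
          {B : Set U | ∃ u' ∈ Ucal, B = Lcl (act1 S x u')} := ⟨u, huU, rfl⟩
      rw [hU] at hmem
      obtain ⟨z, hz, -, hzr⟩ := hmem
      obtain ⟨v', hv'⟩ : ∃ v' : Option ↥S, Lcl (act1 S z v') = Lcl x := by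
        rcases hzr with h | ⟨v, hvS, h⟩
        · exact ⟨none, h⟩
        · exact ⟨some ⟨v, hvS⟩, h⟩
      have hLq : Lcl (act1 S x (mul1 S (mul1 S s u) v')) = Lcl x := by
        rw [act1_mul1, act1_mul1]
        calc Lcl (act1 S (act1 S (act1 S x s) u) v') = Lcl (act1 S z v') :=
              lcl_act1_congr S v' (hwL.trans hz)
          _ = Lcl x := hv'
      obtain ⟨n, hn, hfix⟩ := stab_pow_fix S hLq
      obtain ⟨m, rfl⟩ : ∃ m, n = m + 1 := ⟨n - 1, by omega⟩
      have hx1 : act1 S x (pow1 S (mul1 S (mul1 S s u) v') (m + 1)) = x :=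
        hfix x (greenL_refl x)
      apply (comp_iff S).mpr
      refine ⟨mul1 S v' (pow1 S (mul1 S (mul1 S s u) v') m), ?_⟩
      rw [← act1_mul1, ← act1_mul1, ← mul1_assoc, ← mul1_assoc, ← pow1_succ_left]
      exact hx1
end
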